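/- The symmetry rule Symm is admissible in G3c^=⁻: for all terms s, r and finite multisets Γ, Δ of formulas, if the sequent s = r, Γ ⇒ Δ is derivable in G3c^=⁻, then the sequent r = s, Γ ⇒ Δ is derivable in G3c^=⁻. -/
import Mathlib


open FirstOrder Language Multiset

universe u v

variable {L : FirstOrder.Language.{u, v}}

/-- Number of occurrences of the variable `v` in a term. -/
def tCount (v : ℕ) : L.Term ℕ → ℕ
  | .var w => if w = v then 1 else 0
  | .func _ ts => Finset.univ.sum fun i => tCount v (ts i)

/-- First-order formulas over the language `L` (with built-in equality),
with natural numbers as variables. -/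
inductive Fm (L : FirstOrder.Language.{u, v}) : Type (max u v) where
  | falsum : Fm L
  | equal : L.Term ℕ → L.Term ℕ → Fm L
  | rel {l : ℕ} : L.Relations l → (Fin l → L.Term ℕ) → Fm L
  | and : Fm L → Fm L → Fm L
  | or : Fm L → Fm L → Fm L
  | imp : Fm L → Fm L → Fm L
  | all : ℕ → Fm L → Fm L
  | ex : ℕ → Fm L → Fm L

namespace Fm

/-- Atomic formulas: equalities and relational atoms. -/
inductive IsAtomic : Fm L → Prop where
  | equal (t₁ t₂ : L.Term ℕ) : (Fm.equal t₁ t₂).IsAtomic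
  | rel {l : ℕ} (R : L.Relations l) (ts : Fin l → L.Term ℕ) : (Fm.rel R ts).IsAtomic

/-- Number of free occurrences of the variable `v` in a formula. -/
def fCount (v : ℕ) : Fm L → ℕ
  | falsum => 0
  | equal t₁ t₂ => tCount v t₁ + tCount v t₂
  | rel _ ts => Finset.univ.sum fun i => tCount v (ts i)
  | and A B => fCount v A + fCount v B
  | or A B => fCount v A + fCount v B
  | imp A B => fCount v A + fCount v B
  | all y A => if y = v then 0 else fCount v A
  | ex y A => if y = v then 0 else fCount v A

/-- The set of free variables of a formula. -/
def freeVars : Fm L → Set ℕ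
  | falsum => ∅
  | equal t₁ t₂ => {w | tCount w t₁ ≠ 0 ∨ tCount w t₂ ≠ 0}
  | rel _ ts => {w | ∃ i, tCount w (ts i) ≠ 0}
  | and A B => A.freeVars ∪ B.freeVars
  | or A B => A.freeVars ∪ B.freeVars
  | imp A B => A.freeVars ∪ B.freeVars
  | all y A => A.freeVars \ {y}
  | ex y A => A.freeVars \ {y}

/-- Simultaneous substitution of terms for the free variables of a formula. -/
def ssub (σ : ℕ → L.Term ℕ) : Fm L → Fm L
  | falsum => falsum
  | equal t₁ t₂ => equal (t₁.subst σ) (t₂.subst σ)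
  | rel R ts => rel R fun i => (ts i).subst σ
  | and A B => and (A.ssub σ) (B.ssub σ)
  | or A B => or (A.ssub σ) (B.ssub σ)
  | imp A B => imp (A.ssub σ) (B.ssub σ)
  | all y A => all y (A.ssub (Function.update σ y (Term.var y)))
  | ex y A => ex y (A.ssub (Function.update σ y (Term.var y)))

/-- `A.subst v t` is `A[v/t]`, the substitution of the term `t`
for the variable `v` in `A`. -/
def subst (v : ℕ) (t : L.Term ℕ) (A : Fm L) : Fm L :=
  A.ssub (Function.update (Term.var : ℕ → L.Term ℕ) v t)

/-- `t` is free for `x` in `A` (no free occurrence of `x` lies in the scope of a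
quantifier binding a variable of `t`). -/
def freeFor (t : L.Term ℕ) (x : ℕ) : Fm L → Prop
  | falsum => True
  | equal _ _ => True
  | rel _ _ => True
  | and A B => freeFor t x A ∧ freeFor t x B
  | or A B => freeFor t x A ∧ freeFor t x B
  | imp A B => freeFor t x A ∧ freeFor t x B
  | all y A => x = y ∨ x ∉ A.freeVars ∨ (tCount y t = 0 ∧ freeFor t x A)
  | ex y A => x = y ∨ x ∉ A.freeVars ∨ (tCount y t = 0 ∧ freeFor t x A)

end Fm

/-- The rule Repl, given as the relation between the antecedent of the premiss and the
antecedent of the conclusion (the succedent is unchanged): from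
`s = r, P[v/s], P[v/r], Γ ⇒ Δ` infer `s = r, P[v/s], Γ ⇒ Δ`, for `P` atomic and
`v` not occurring in `s, r`. -/
def ReplFull (L : FirstOrder.Language.{u, v}) : Multiset (Fm L) → Multiset (Fm L) → Prop := fun Γp Γc =>
  ∃ (s r : L.Term ℕ) (v : ℕ) (P : Fm L) (Γ : Multiset (Fm L)),
    P.IsAtomic ∧ tCount v s = 0 ∧ tCount v r = 0 ∧
    Γp = Fm.equal s r ::ₘ P.subst v s ::ₘ P.subst v r ::ₘ Γ ∧
    Γc = Fm.equal s r ::ₘ P.subst v s ::ₘ Γ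

/-- The rule Repl⁻: from `s = r, P[v/r], Γ ⇒ Δ` infer `s = r, P[v/s], Γ ⇒ Δ`,
for `P` atomic and `v` not occurring in `s, r`. -/
def ReplMinus (L : FirstOrder.Language.{u, v}) : Multiset (Fm L) → Multiset (Fm L) → Prop := fun Γp Γc =>
  ∃ (s r : L.Term ℕ) (v : ℕ) (P : Fm L) (Γ : Multiset (Fm L)),
    P.IsAtomic ∧ tCount v s = 0 ∧ tCount v r = 0 ∧
    Γp = Fm.equal s r ::ₘ P.subst v r ::ₘ Γ ∧
    Γc = Fm.equal s r ::ₘ P.subst v s ::ₘ Γ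

/-- The rule Repl₁⁻: Repl⁻ restricted to atomic `P` with exactly one occurrence of `v`. -/
def ReplMinus1 (L : FirstOrder.Language.{u, v}) : Multiset (Fm L) → Multiset (Fm L) → Prop := fun Γp Γc =>
  ∃ (s r : L.Term ℕ) (v : ℕ) (P : Fm L) (Γ : Multiset (Fm L)),
    P.IsAtomic ∧ tCount v s = 0 ∧ tCount v r = 0 ∧ Fm.fCount v P = 1 ∧
    Γp = Fm.equal s r ::ₘ P.subst v r ::ₘ Γ ∧
    Γc = Fm.equal s r ::ₘ P.subst v s ::ₘ Γ

/-- `DerC rp n Γ Δ`: the sequent `Γ ⇒ Δ` has a derivation of height at most `n` in the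
classical multisuccedent G3 calculus `G3c` with the equality rule Ref and the
replacement rule given by `rp` (e.g. `ReplFull L` for `G3c^=`, `ReplMinus L` for `G3c^=⁻`,
`ReplMinus1 L` for `G3c₁^=⁻`). -/
inductive DerC (rp : Multiset (Fm L) → Multiset (Fm L) → Prop) :
    ℕ → Multiset (Fm L) → Multiset (Fm L) → Prop where
  | ax {n : ℕ} {Γ Δ : Multiset (Fm L)} {P : Fm L} (hP : P.IsAtomic) :
      DerC rp n (P ::ₘ Γ) (P ::ₘ Δ)
  | botL {n : ℕ} {Γ Δ : Multiset (Fm L)} : DerC rp n (Fm.falsum ::ₘ Γ) Δ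
  | andL {n : ℕ} {Γ Δ : Multiset (Fm L)} {A B : Fm L} :
      DerC rp n (A ::ₘ B ::ₘ Γ) Δ → DerC rp (n + 1) (Fm.and A B ::ₘ Γ) Δ
  | andR {n : ℕ} {Γ Δ : Multiset (Fm L)} {A B : Fm L} :
      DerC rp n Γ (A ::ₘ Δ) → DerC rp n Γ (B ::ₘ Δ) → DerC rp (n + 1) Γ (Fm.and A B ::ₘ Δ)
  | orL {n : ℕ} {Γ Δ : Multiset (Fm L)} {A B : Fm L} :
      DerC rp n (A ::ₘ Γ) Δ → DerC rp n (B ::ₘ Γ) Δ → DerC rp (n + 1) (Fm.or A B ::ₘ Γ) Δ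
  | orR {n : ℕ} {Γ Δ : Multiset (Fm L)} {A B : Fm L} :
      DerC rp n Γ (A ::ₘ B ::ₘ Δ) → DerC rp (n + 1) Γ (Fm.or A B ::ₘ Δ)
  | impL {n : ℕ} {Γ Δ : Multiset (Fm L)} {A B : Fm L} :
      DerC rp n Γ (A ::ₘ Δ) → DerC rp n (B ::ₘ Γ) Δ → DerC rp (n + 1) (Fm.imp A B ::ₘ Γ) Δ
  | impR {n : ℕ} {Γ Δ : Multiset (Fm L)} {A B : Fm L} :
      DerC rp n (A ::ₘ Γ) (B ::ₘ Δ) → DerC rp (n + 1) Γ (Fm.imp A B ::ₘ Δ)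
  | allL {n : ℕ} {Γ Δ : Multiset (Fm L)} {x : ℕ} {t : L.Term ℕ} {A : Fm L}
      (hf : Fm.freeFor t x A) :
      DerC rp n (A.subst x t ::ₘ Fm.all x A ::ₘ Γ) Δ → DerC rp (n + 1) (Fm.all x A ::ₘ Γ) Δ
  | allR {n : ℕ} {Γ Δ : Multiset (Fm L)} {x y : ℕ} {A : Fm L}
      (hf : Fm.freeFor (Term.var y) x A) (hy : y ∉ (Fm.all x A).freeVars)
      (hΓ : ∀ C ∈ Γ, y ∉ Fm.freeVars C) (hΔ : ∀ C ∈ Δ, y ∉ Fm.freeVars C) :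
      DerC rp n Γ (A.subst x (Term.var y) ::ₘ Δ) → DerC rp (n + 1) Γ (Fm.all x A ::ₘ Δ)
  | exL {n : ℕ} {Γ Δ : Multiset (Fm L)} {x y : ℕ} {A : Fm L}
      (hf : Fm.freeFor (Term.var y) x A) (hy : y ∉ (Fm.ex x A).freeVars)
      (hΓ : ∀ C ∈ Γ, y ∉ Fm.freeVars C) (hΔ : ∀ C ∈ Δ, y ∉ Fm.freeVars C) :
      DerC rp n (A.subst x (Term.var y) ::ₘ Γ) Δ → DerC rp (n + 1) (Fm.ex x A ::ₘ Γ) Δ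
  | exR {n : ℕ} {Γ Δ : Multiset (Fm L)} {x : ℕ} {t : L.Term ℕ} {A : Fm L}
      (hf : Fm.freeFor t x A) :
      DerC rp n Γ (A.subst x t ::ₘ Fm.ex x A ::ₘ Δ) → DerC rp (n + 1) Γ (Fm.ex x A ::ₘ Δ)
  | ref {n : ℕ} {Γ Δ : Multiset (Fm L)} (t : L.Term ℕ) :
      DerC rp n (Fm.equal t t ::ₘ Γ) Δ → DerC rp (n + 1) Γ Δ
  | repl {n : ℕ} {Γp Γc Δ : Multiset (Fm L)} (h : rp Γp Γc) :
      DerC rp n Γp Δ → DerC rp (n + 1) Γc Δ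

/-- `DerI rp n Γ Δ`: the sequent `Γ ⇒ Δ` has a derivation of height at most `n` in the
intuitionistic multisuccedent G3 calculus (the right rules for `→` and `∀` have
single-succedent premisses, and L→ repeats its principal formula) with the equality rule
Ref and the replacement rule given by `rp`. -/
inductive DerI (rp : Multiset (Fm L) → Multiset (Fm L) → Prop) :
    ℕ → Multiset (Fm L) → Multiset (Fm L) → Prop where
  | ax {n : ℕ} {Γ Δ : Multiset (Fm L)} {P : Fm L} (hP : P.IsAtomic) :
      DerI rp n (P ::ₘ Γ) (P ::ₘ Δ)
  | botL {n : ℕ} {Γ Δ : Multiset (Fm L)} : DerI rp n (Fm.falsum ::ₘ Γ) Δ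
  | andL {n : ℕ} {Γ Δ : Multiset (Fm L)} {A B : Fm L} :
      DerI rp n (A ::ₘ B ::ₘ Γ) Δ → DerI rp (n + 1) (Fm.and A B ::ₘ Γ) Δ
  | andR {n : ℕ} {Γ Δ : Multiset (Fm L)} {A B : Fm L} :
      DerI rp n Γ (A ::ₘ Δ) → DerI rp n Γ (B ::ₘ Δ) → DerI rp (n + 1) Γ (Fm.and A B ::ₘ Δ)
  | orL {n : ℕ} {Γ Δ : Multiset (Fm L)} {A B : Fm L} :
      DerI rp n (A ::ₘ Γ) Δ → DerI rp n (B ::ₘ Γ) Δ → DerI rp (n + 1) (Fm.or A B ::ₘ Γ) Δ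
  | orR {n : ℕ} {Γ Δ : Multiset (Fm L)} {A B : Fm L} :
      DerI rp n Γ (A ::ₘ B ::ₘ Δ) → DerI rp (n + 1) Γ (Fm.or A B ::ₘ Δ)
  | impL {n : ℕ} {Γ Δ : Multiset (Fm L)} {A B : Fm L} :
      DerI rp n (Fm.imp A B ::ₘ Γ) (A ::ₘ Δ) → DerI rp n (B ::ₘ Γ) Δ →
      DerI rp (n + 1) (Fm.imp A B ::ₘ Γ) Δ
  | impR {n : ℕ} {Γ Δ : Multiset (Fm L)} {A B : Fm L} :
      DerI rp n (A ::ₘ Γ) {B} → DerI rp (n + 1) Γ (Fm.imp A B ::ₘ Δ)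
  | allL {n : ℕ} {Γ Δ : Multiset (Fm L)} {x : ℕ} {t : L.Term ℕ} {A : Fm L}
      (hf : Fm.freeFor t x A) :
      DerI rp n (A.subst x t ::ₘ Fm.all x A ::ₘ Γ) Δ → DerI rp (n + 1) (Fm.all x A ::ₘ Γ) Δ
  | allR {n : ℕ} {Γ Δ : Multiset (Fm L)} {x y : ℕ} {A : Fm L}
      (hf : Fm.freeFor (Term.var y) x A) (hy : y ∉ (Fm.all x A).freeVars)
      (hΓ : ∀ C ∈ Γ, y ∉ Fm.freeVars C) :
      DerI rp n Γ {A.subst x (Term.var y)} → DerI rp (n + 1) Γ (Fm.all x A ::ₘ Δ)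
  | exL {n : ℕ} {Γ Δ : Multiset (Fm L)} {x y : ℕ} {A : Fm L}
      (hf : Fm.freeFor (Term.var y) x A) (hy : y ∉ (Fm.ex x A).freeVars)
      (hΓ : ∀ C ∈ Γ, y ∉ Fm.freeVars C) (hΔ : ∀ C ∈ Δ, y ∉ Fm.freeVars C) :
      DerI rp n (A.subst x (Term.var y) ::ₘ Γ) Δ → DerI rp (n + 1) (Fm.ex x A ::ₘ Γ) Δ
  | exR {n : ℕ} {Γ Δ : Multiset (Fm L)} {x : ℕ} {t : L.Term ℕ} {A : Fm L}
      (hf : Fm.freeFor t x A) :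
      DerI rp n Γ (A.subst x t ::ₘ Fm.ex x A ::ₘ Δ) → DerI rp (n + 1) Γ (Fm.ex x A ::ₘ Δ)
  | ref {n : ℕ} {Γ Δ : Multiset (Fm L)} (t : L.Term ℕ) :
      DerI rp n (Fm.equal t t ::ₘ Γ) Δ → DerI rp (n + 1) Γ Δ
  | repl {n : ℕ} {Γp Γc Δ : Multiset (Fm L)} (h : rp Γp Γc) :
      DerI rp n Γp Δ → DerI rp (n + 1) Γc Δ


section SymmHelpers

variable {L : FirstOrder.Language.{u, v}}

private lemma sw {α : Type*} (a b : α) (s : Multiset α) :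
    a ::ₘ b ::ₘ s = b ::ₘ a ::ₘ s := Multiset.cons_swap a b s

private lemma sw3 {α : Type*} (a b c : α) (s : Multiset α) :
    a ::ₘ b ::ₘ c ::ₘ s = b ::ₘ c ::ₘ a ::ₘ s := by
  rw [Multiset.cons_swap a b, Multiset.cons_swap a c]

private lemma sw23 {α : Type*} (a b c : α) (s : Multiset α) :
    a ::ₘ b ::ₘ c ::ₘ s = a ::ₘ c ::ₘ b ::ₘ s := by
  rw [Multiset.cons_swap b c]

private lemma cases_cons {α : Type*} {a b : α} {s t : Multiset α} (h : a ::ₘ s = b ::ₘ t) :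
    (a = b ∧ s = t) ∨ ∃ u, s = b ::ₘ u ∧ t = a ::ₘ u := by
  rcases Multiset.cons_eq_cons.mp h with ⟨h1, h2⟩ | ⟨-, u, h1, h2⟩
  · exact Or.inl ⟨h1, h2⟩
  · exact Or.inr ⟨u, h1, h2⟩

private lemma DerC.succ {rp : Multiset (Fm L) → Multiset (Fm L) → Prop} {n : ℕ}
    {Γ Δ : Multiset (Fm L)} (h : DerC rp n Γ Δ) : DerC rp (n + 1) Γ Δ := by
  induction h with
  | ax hP => exact .ax hP
  | botL => exact .botL
  | andL _ ih => exact .andL ih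
  | andR _ _ ih1 ih2 => exact .andR ih1 ih2
  | orL _ _ ih1 ih2 => exact .orL ih1 ih2
  | orR _ ih => exact .orR ih
  | impL _ _ ih1 ih2 => exact .impL ih1 ih2
  | impR _ ih => exact .impR ih
  | allL hf _ ih => exact .allL hf ih
  | allR hf hy hΓ hΔ _ ih => exact .allR hf hy hΓ hΔ ih
  | exL hf hy hΓ hΔ _ ih => exact .exL hf hy hΓ hΔ ih
  | exR hf _ ih => exact .exR hf ih
  | ref t _ ih => exact .ref t ih
  | repl h _ ih => exact .repl h ih

private lemma DerC.mono {rp : Multiset (Fm L) → Multiset (Fm L) → Prop} {n m : ℕ}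
    {Γ Δ : Multiset (Fm L)} (h : DerC rp n Γ Δ) (hnm : n ≤ m) : DerC rp m Γ Δ := by
  induction hnm with
  | refl => exact h
  | step _ ih => exact ih.succ

private lemma tCount_bound (t : L.Term ℕ) : ∃ N, ∀ w, N ≤ w → tCount w t = 0 := by
  induction t with
  | var x =>
    refine ⟨x + 1, fun w hw => ?_⟩
    simp only [tCount, if_neg (by omega : ¬ x = w)]
  | func f ts ih =>
    choose N hN using ih
    refine ⟨Finset.univ.sup N, fun w hw => ?_⟩
    simp only [tCount]
    exact Finset.sum_eq_zero fun i _ =>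
      hN i w (le_trans (Finset.le_sup (Finset.mem_univ i)) hw)

private lemma exists_fresh (s r : L.Term ℕ) : ∃ w, tCount w s = 0 ∧ tCount w r = 0 := by
  obtain ⟨N1, h1⟩ := tCount_bound s
  obtain ⟨N2, h2⟩ := tCount_bound r
  exact ⟨max N1 N2, h1 _ (le_max_left _ _), h2 _ (le_max_right _ _)⟩

private lemma subst_id {w : ℕ} (u : L.Term ℕ) :
    ∀ {t : L.Term ℕ}, tCount w t = 0 → t.subst (Function.update Term.var w u) = t := by
  intro t
  induction t with
  | var x =>
    intro h
    simp only [tCount, ite_eq_right_iff] at h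
    have hxw : x ≠ w := fun he => by simp [he] at h
    simp [Term.subst, Function.update_of_ne hxw]
  | func f ts ih =>
    intro h
    simp only [tCount, Finset.sum_eq_zero_iff, Finset.mem_univ, forall_true_left] at h
    simp only [Term.subst]
    congr 1
    funext i
    exact ih i (h i)

private lemma subst_equal (v : ℕ) (u t₁ t₂ : L.Term ℕ) :
    (Fm.equal t₁ t₂).subst v u =
      Fm.equal (t₁.subst (Function.update Term.var v u))
        (t₂.subst (Function.update Term.var v u)) := rfl

private lemma notin_fv_swap {y : ℕ} {s r : L.Term ℕ}
    (h : y ∉ (Fm.equal s r).freeVars) : y ∉ (Fm.equal r s).freeVars := by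
  simp only [Fm.freeVars, Set.mem_setOf_eq] at *
  tauto

/-- Reduce `r=s, Γ ⇒ Δ` to `r=s, s=r, Γ ⇒ Δ` using Ref and Repl⁻. -/
private lemma introSymm {n : ℕ} (s r : L.Term ℕ) (Γ Δ : Multiset (Fm L))
    (h : DerC (ReplMinus L) n (Fm.equal r s ::ₘ Fm.equal s r ::ₘ Γ) Δ) :
    ∃ m, DerC (ReplMinus L) m (Fm.equal r s ::ₘ Γ) Δ := by
  obtain ⟨w, hws, hwr⟩ := exists_fresh s r
  have hrep : ReplMinus L (Fm.equal r s ::ₘ Fm.equal s r ::ₘ Γ)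
      (Fm.equal r s ::ₘ Fm.equal r r ::ₘ Γ) := by
    refine ⟨r, s, w, Fm.equal (Term.var w) r, Γ, .equal _ _, hwr, hws, ?_, ?_⟩
    · rw [subst_equal]
      simp [Term.subst, Function.update_self, subst_id _ hwr]
    · rw [subst_equal]
      simp [Term.subst, Function.update_self, subst_id _ hwr]
  have h2 : DerC (ReplMinus L) (n + 1) (Fm.equal r s ::ₘ Fm.equal r r ::ₘ Γ) Δ :=
    .repl hrep h
  exact ⟨n + 2, .ref r (by rw [sw]; exact h2)⟩

end SymmHelpers
section SymmMain

variable {L : FirstOrder.Language.{u, v}}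

private lemma derCast {rp : Multiset (Fm L) → Multiset (Fm L) → Prop} {n : ℕ}
    {Γ Γ2 Δ : Multiset (Fm L)} (h : DerC rp n Γ Δ) (e : Γ = Γ2) : DerC rp n Γ2 Δ := e ▸ h

/-- Weakening by the flip of an equality already present in the antecedent. -/
private lemma weakFlip {n : ℕ} {Γ' Δ : Multiset (Fm L)}
    (hd : DerC (ReplMinus L) n Γ' Δ) :
    ∀ (a b : L.Term ℕ) (Γ : Multiset (Fm L)), Γ' = Fm.equal a b ::ₘ Γ →
      ∃ m, DerC (ReplMinus L) m (Fm.equal b a ::ₘ Γ') Δ := by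
  induction hd with
  | @ax n Γ₀ Δ₀ P hP =>
    intro a b Γ heq
    exact ⟨0, derCast (.ax hP) (sw _ _ _).symm⟩
  | botL =>
    intro a b Γ heq
    exact ⟨0, derCast .botL (sw _ _ _).symm⟩
  | @andL n Γ₀ Δ₀ A B hp ih =>
    intro a b Γ heq
    rcases cases_cons heq with ⟨he, -⟩ | ⟨u, h1, -⟩
    · exact absurd he (by simp)
    · obtain ⟨m, d⟩ := ih a b (A ::ₘ B ::ₘ u) (by rw [h1]; exact (sw3 _ _ _ _).symm)
      exact ⟨m + 1, derCast (.andL (derCast d (sw3 _ _ _ _))) (sw _ _ _)⟩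
  | @andR n Γ₀ Δ₀ A B hp1 hp2 ih1 ih2 =>
    intro a b Γ heq
    obtain ⟨m1, d1⟩ := ih1 a b Γ heq
    obtain ⟨m2, d2⟩ := ih2 a b Γ heq
    exact ⟨max m1 m2 + 1, .andR (d1.mono (le_max_left _ _)) (d2.mono (le_max_right _ _))⟩
  | @orL n Γ₀ Δ₀ A B hp1 hp2 ih1 ih2 =>
    intro a b Γ heq
    rcases cases_cons heq with ⟨he, -⟩ | ⟨u, h1, -⟩
    · exact absurd he (by simp)
    · obtain ⟨m1, d1⟩ := ih1 a b (A ::ₘ u) (by rw [h1]; exact (sw _ _ _).symm)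
      obtain ⟨m2, d2⟩ := ih2 a b (B ::ₘ u) (by rw [h1]; exact (sw _ _ _).symm)
      exact ⟨max m1 m2 + 1,
        derCast (.orL (derCast (d1.mono (le_max_left _ _)) (sw _ _ _))
          (derCast (d2.mono (le_max_right _ _)) (sw _ _ _))) (sw _ _ _)⟩
  | @orR n Γ₀ Δ₀ A B hp ih =>
    intro a b Γ heq
    obtain ⟨m, d⟩ := ih a b Γ heq
    exact ⟨m + 1, .orR d⟩
  | @impL n Γ₀ Δ₀ A B hp1 hp2 ih1 ih2 =>
    intro a b Γ heq
    rcases cases_cons heq with ⟨he, -⟩ | ⟨u, h1, -⟩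
    · exact absurd he (by simp)
    · obtain ⟨m1, d1⟩ := ih1 a b u h1
      obtain ⟨m2, d2⟩ := ih2 a b (B ::ₘ u) (by rw [h1]; exact (sw _ _ _).symm)
      exact ⟨max m1 m2 + 1,
        derCast (.impL (d1.mono (le_max_left _ _))
          (derCast (d2.mono (le_max_right _ _)) (sw _ _ _))) (sw _ _ _)⟩
  | @impR n Γ₀ Δ₀ A B hp ih =>
    intro a b Γ heq
    obtain ⟨m, d⟩ := ih a b (A ::ₘ Γ) (by rw [heq]; exact sw _ _ _)
    exact ⟨m + 1, .impR (derCast d (sw _ _ _))⟩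
  | @allL n Γ₀ Δ₀ x t A hf hp ih =>
    intro a b Γ heq
    rcases cases_cons heq with ⟨he, -⟩ | ⟨u, h1, -⟩
    · exact absurd he (by simp)
    · obtain ⟨m, d⟩ := ih a b (A.subst x t ::ₘ Fm.all x A ::ₘ u)
        (by rw [h1]; exact (sw3 _ _ _ _).symm)
      exact ⟨m + 1, derCast (.allL hf (derCast d (sw3 _ _ _ _))) (sw _ _ _)⟩
  | @allR n Γ₀ Δ₀ x y A hf hy hΓ hΔ hp ih =>
    intro a b Γ heq
    obtain ⟨m, d⟩ := ih a b Γ heq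
    have hE : Fm.equal a b ∈ Γ₀ := by rw [heq]; exact Multiset.mem_cons_self _ _
    have hΓ' : ∀ C ∈ Fm.equal b a ::ₘ Γ₀, y ∉ Fm.freeVars C := by
      intro C hC
      rcases Multiset.mem_cons.mp hC with rfl | hC
      · exact notin_fv_swap (hΓ _ hE)
      · exact hΓ C hC
    exact ⟨m + 1, .allR hf hy hΓ' hΔ d⟩
  | @exL n Γ₀ Δ₀ x y A hf hy hΓ hΔ hp ih =>
    intro a b Γ heq
    rcases cases_cons heq with ⟨he, -⟩ | ⟨u, h1, -⟩
    · exact absurd he (by simp)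
    · obtain ⟨m, d⟩ := ih a b (A.subst x (Term.var y) ::ₘ u)
        (by rw [h1]; exact (sw _ _ _).symm)
      have hE : Fm.equal a b ∈ Γ₀ := by rw [h1]; exact Multiset.mem_cons_self _ _
      have hΓ' : ∀ C ∈ Fm.equal b a ::ₘ Γ₀, y ∉ Fm.freeVars C := by
        intro C hC
        rcases Multiset.mem_cons.mp hC with rfl | hC
        · exact notin_fv_swap (hΓ _ hE)
        · exact hΓ C hC
      exact ⟨m + 1, derCast (.exL hf hy hΓ' hΔ (derCast d (sw _ _ _))) (sw _ _ _)⟩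
  | @exR n Γ₀ Δ₀ x t A hf hp ih =>
    intro a b Γ heq
    obtain ⟨m, d⟩ := ih a b Γ heq
    exact ⟨m + 1, .exR hf d⟩
  | @ref n Γ₀ Δ₀ t hp ih =>
    intro a b Γ heq
    obtain ⟨m, d⟩ := ih a b (Fm.equal t t ::ₘ Γ) (by rw [heq]; exact sw _ _ _)
    exact ⟨m + 1, .ref t (derCast d (sw _ _ _))⟩
  | @repl n Γp Γc Δ₀ h hp ih =>
    intro a b Γ heq
    obtain ⟨c₁, c₂, v, Q, Γ₀, hQ, hvc, hvd, hΓp, hΓc⟩ := h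
    have h0 : Fm.equal c₁ c₂ ::ₘ Q.subst v c₁ ::ₘ Γ₀ = Fm.equal a b ::ₘ Γ := by
      rw [← hΓc]; exact heq
    rcases cases_cons h0 with ⟨he, -⟩ | ⟨u, h1, h2⟩
    · injection he with e1 e2
      subst e1; subst e2
      obtain ⟨m, d1⟩ := ih c₁ c₂ (Q.subst v c₂ ::ₘ Γ₀) hΓp
      have d1' : DerC (ReplMinus L) m
          (Fm.equal c₂ c₁ ::ₘ Fm.equal c₁ c₂ ::ₘ Q.subst v c₂ ::ₘ Γ₀) Δ₀ :=
        derCast d1 (by rw [hΓp])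
      have hrep : ReplMinus L
          (Fm.equal c₁ c₂ ::ₘ Q.subst v c₂ ::ₘ (Fm.equal c₂ c₁ ::ₘ Γ₀))
          (Fm.equal c₁ c₂ ::ₘ Q.subst v c₁ ::ₘ (Fm.equal c₂ c₁ ::ₘ Γ₀)) :=
        ⟨c₁, c₂, v, Q, _, hQ, hvc, hvd, rfl, rfl⟩
      refine ⟨m + 1, ?_⟩
      rw [hΓc]
      exact derCast (.repl hrep (derCast d1' (sw3 _ _ _ _))) (sw3 _ _ _ _).symm
    · rcases cases_cons h1 with ⟨he2, -⟩ | ⟨w, hw1, -⟩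
      · -- Q.subst v c₁ = equal a b
        cases hQ with
        | rel R ts => exact absurd he2 (by simp [Fm.subst, Fm.ssub])
        | equal t₁ t₂ =>
          rw [subst_equal] at he2
          injection he2 with e1 e2
          subst e1; subst e2
          obtain ⟨m, d1⟩ := ih (t₁.subst (Function.update Term.var v c₂))
            (t₂.subst (Function.update Term.var v c₂)) (Fm.equal c₁ c₂ ::ₘ Γ₀)
            (by rw [hΓp, subst_equal]; exact sw _ _ _)
          have d1' : DerC (ReplMinus L) m
              (Fm.equal (t₂.subst (Function.update Term.var v c₂))
                  (t₁.subst (Function.update Term.var v c₂)) ::ₘ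
                Fm.equal c₁ c₂ ::ₘ (Fm.equal t₁ t₂).subst v c₂ ::ₘ Γ₀) Δ₀ :=
            derCast d1 (by rw [hΓp])
          have hrepB : ReplMinus L
              (Fm.equal c₁ c₂ ::ₘ (Fm.equal t₁ t₂).subst v c₂ ::ₘ
                (Fm.equal (t₂.subst (Function.update Term.var v c₂))
                  (t₁.subst (Function.update Term.var v c₂)) ::ₘ Γ₀))
              (Fm.equal c₁ c₂ ::ₘ (Fm.equal t₁ t₂).subst v c₁ ::ₘ
                (Fm.equal (t₂.subst (Function.update Term.var v c₂))
                  (t₁.subst (Function.update Term.var v c₂)) ::ₘ Γ₀)) :=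
            ⟨c₁, c₂, v, Fm.equal t₁ t₂, _, .equal _ _, hvc, hvd, rfl, rfl⟩
          have d2 := DerC.repl hrepB (derCast d1' (sw3 _ _ _ _))
          have hrepA : ReplMinus L
              (Fm.equal c₁ c₂ ::ₘ (Fm.equal t₂ t₁).subst v c₂ ::ₘ
                ((Fm.equal t₁ t₂).subst v c₁ ::ₘ Γ₀))
              (Fm.equal c₁ c₂ ::ₘ (Fm.equal t₂ t₁).subst v c₁ ::ₘ
                ((Fm.equal t₁ t₂).subst v c₁ ::ₘ Γ₀)) :=
            ⟨c₁, c₂, v, Fm.equal t₂ t₁, _, .equal _ _, hvc, hvd, rfl, rfl⟩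
          have d3 := DerC.repl hrepA (derCast d2 (sw23 _ _ _ _))
          refine ⟨m + 2, ?_⟩
          rw [hΓc]
          exact derCast d3 (sw _ _ _)
      · obtain ⟨m, d1⟩ := ih a b (Fm.equal c₁ c₂ ::ₘ Q.subst v c₂ ::ₘ w)
          (by rw [hΓp, hw1]; exact (sw3 _ _ _ _).symm)
        have d1' : DerC (ReplMinus L) m
            (Fm.equal b a ::ₘ Fm.equal c₁ c₂ ::ₘ Q.subst v c₂ ::ₘ Γ₀) Δ₀ :=
          derCast d1 (by rw [hΓp])
        have hrep : ReplMinus L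
            (Fm.equal c₁ c₂ ::ₘ Q.subst v c₂ ::ₘ (Fm.equal b a ::ₘ Γ₀))
            (Fm.equal c₁ c₂ ::ₘ Q.subst v c₁ ::ₘ (Fm.equal b a ::ₘ Γ₀)) :=
          ⟨c₁, c₂, v, Q, _, hQ, hvc, hvd, rfl, rfl⟩
        refine ⟨m + 1, ?_⟩
        rw [hΓc]
        exact derCast (.repl hrep (derCast d1' (sw3 _ _ _ _))) (sw3 _ _ _ _).symm

end SymmMain
section SymmFinal

variable {L : FirstOrder.Language.{u, v}}

private lemma symmFlip {n : ℕ} {Γ' Δ : Multiset (Fm L)}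
    (hd : DerC (ReplMinus L) n Γ' Δ) :
    ∀ (s r : L.Term ℕ) (Γ : Multiset (Fm L)), Γ' = Fm.equal s r ::ₘ Γ →
      ∃ m, DerC (ReplMinus L) m (Fm.equal r s ::ₘ Γ) Δ := by
  induction hd with
  | @ax n Γ₀ Δ₀ P hP =>
    intro s r Γ heq
    rcases cases_cons heq with ⟨he, hG⟩ | ⟨u, h1, h2⟩
    · subst he; subst hG
      exact introSymm s r Γ₀ _
        (derCast (DerC.ax (n := 0) (Fm.IsAtomic.equal s r)) (sw _ _ _))
    · exact ⟨0, by rw [h2, sw (Fm.equal r s) P u]; exact .ax hP⟩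
  | botL =>
    intro s r Γ heq
    rcases cases_cons heq with ⟨he, -⟩ | ⟨u, h1, h2⟩
    · exact absurd he (by simp)
    · exact ⟨0, by rw [h2, sw (Fm.equal r s) Fm.falsum u]; exact .botL⟩
  | @andL n Γ₀ Δ₀ A B hp ih =>
    intro s r Γ heq
    rcases cases_cons heq with ⟨he, -⟩ | ⟨u, h1, h2⟩
    · exact absurd he (by simp)
    · obtain ⟨m, d⟩ := ih s r (A ::ₘ B ::ₘ u) (by rw [h1]; exact (sw3 _ _ _ _).symm)
      refine ⟨m + 1, ?_⟩
      rw [h2]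
      exact derCast (.andL (derCast d (sw3 _ _ _ _))) (sw _ _ _)
  | @andR n Γ₀ Δ₀ A B hp1 hp2 ih1 ih2 =>
    intro s r Γ heq
    obtain ⟨m1, d1⟩ := ih1 s r Γ heq
    obtain ⟨m2, d2⟩ := ih2 s r Γ heq
    exact ⟨max m1 m2 + 1, .andR (d1.mono (le_max_left _ _)) (d2.mono (le_max_right _ _))⟩
  | @orL n Γ₀ Δ₀ A B hp1 hp2 ih1 ih2 =>
    intro s r Γ heq
    rcases cases_cons heq with ⟨he, -⟩ | ⟨u, h1, h2⟩
    · exact absurd he (by simp)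
    · obtain ⟨m1, d1⟩ := ih1 s r (A ::ₘ u) (by rw [h1]; exact (sw _ _ _).symm)
      obtain ⟨m2, d2⟩ := ih2 s r (B ::ₘ u) (by rw [h1]; exact (sw _ _ _).symm)
      refine ⟨max m1 m2 + 1, ?_⟩
      rw [h2]
      exact derCast (.orL (derCast (d1.mono (le_max_left _ _)) (sw _ _ _))
        (derCast (d2.mono (le_max_right _ _)) (sw _ _ _))) (sw _ _ _)
  | @orR n Γ₀ Δ₀ A B hp ih =>
    intro s r Γ heq
    obtain ⟨m, d⟩ := ih s r Γ heq
    exact ⟨m + 1, .orR d⟩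
  | @impL n Γ₀ Δ₀ A B hp1 hp2 ih1 ih2 =>
    intro s r Γ heq
    rcases cases_cons heq with ⟨he, -⟩ | ⟨u, h1, h2⟩
    · exact absurd he (by simp)
    · obtain ⟨m1, d1⟩ := ih1 s r u h1
      obtain ⟨m2, d2⟩ := ih2 s r (B ::ₘ u) (by rw [h1]; exact (sw _ _ _).symm)
      refine ⟨max m1 m2 + 1, ?_⟩
      rw [h2]
      exact derCast (.impL (d1.mono (le_max_left _ _))
        (derCast (d2.mono (le_max_right _ _)) (sw _ _ _))) (sw _ _ _)
  | @impR n Γ₀ Δ₀ A B hp ih =>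
    intro s r Γ heq
    obtain ⟨m, d⟩ := ih s r (A ::ₘ Γ) (by rw [heq]; exact sw _ _ _)
    exact ⟨m + 1, .impR (derCast d (sw _ _ _))⟩
  | @allL n Γ₀ Δ₀ x t A hf hp ih =>
    intro s r Γ heq
    rcases cases_cons heq with ⟨he, -⟩ | ⟨u, h1, h2⟩
    · exact absurd he (by simp)
    · obtain ⟨m, d⟩ := ih s r (A.subst x t ::ₘ Fm.all x A ::ₘ u)
        (by rw [h1]; exact (sw3 _ _ _ _).symm)
      refine ⟨m + 1, ?_⟩
      rw [h2]
      exact derCast (.allL hf (derCast d (sw3 _ _ _ _))) (sw _ _ _)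
  | @allR n Γ₀ Δ₀ x y A hf hy hΓ hΔ hp ih =>
    intro s r Γ heq
    obtain ⟨m, d⟩ := ih s r Γ heq
    have hE : Fm.equal s r ∈ Γ₀ := by rw [heq]; exact Multiset.mem_cons_self _ _
    have hΓ' : ∀ C ∈ Fm.equal r s ::ₘ Γ, y ∉ Fm.freeVars C := by
      intro C hC
      rcases Multiset.mem_cons.mp hC with rfl | hC
      · exact notin_fv_swap (hΓ _ hE)
      · exact hΓ C (by rw [heq]; exact Multiset.mem_cons_of_mem hC)
    exact ⟨m + 1, .allR hf hy hΓ' hΔ d⟩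
  | @exL n Γ₀ Δ₀ x y A hf hy hΓ hΔ hp ih =>
    intro s r Γ heq
    rcases cases_cons heq with ⟨he, -⟩ | ⟨u, h1, h2⟩
    · exact absurd he (by simp)
    · obtain ⟨m, d⟩ := ih s r (A.subst x (Term.var y) ::ₘ u)
        (by rw [h1]; exact (sw _ _ _).symm)
      have hE : Fm.equal s r ∈ Γ₀ := by rw [h1]; exact Multiset.mem_cons_self _ _
      have hΓ' : ∀ C ∈ Fm.equal r s ::ₘ u, y ∉ Fm.freeVars C := by
        intro C hC
        rcases Multiset.mem_cons.mp hC with rfl | hC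
        · exact notin_fv_swap (hΓ _ hE)
        · exact hΓ C (by rw [h1]; exact Multiset.mem_cons_of_mem hC)
      refine ⟨m + 1, ?_⟩
      rw [h2]
      exact derCast (.exL hf hy hΓ' hΔ (derCast d (sw _ _ _))) (sw _ _ _)
  | @exR n Γ₀ Δ₀ x t A hf hp ih =>
    intro s r Γ heq
    obtain ⟨m, d⟩ := ih s r Γ heq
    exact ⟨m + 1, .exR hf d⟩
  | @ref n Γ₀ Δ₀ t hp ih =>
    intro s r Γ heq
    obtain ⟨m, d⟩ := ih s r (Fm.equal t t ::ₘ Γ) (by rw [heq]; exact sw _ _ _)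
    exact ⟨m + 1, .ref t (derCast d (sw _ _ _))⟩
  | @repl n Γp Γc Δ₀ h hp ih =>
    intro s r Γ heq
    obtain ⟨c₁, c₂, v, Q, Γ₀, hQ, hvc, hvd, hΓp, hΓc⟩ := h
    have h0 : Fm.equal c₁ c₂ ::ₘ Q.subst v c₁ ::ₘ Γ₀ = Fm.equal s r ::ₘ Γ := by
      rw [← hΓc]; exact heq
    rcases cases_cons h0 with ⟨he, hG⟩ | ⟨u, h1, h2⟩
    · injection he with e1 e2
      subst e1; subst e2
      obtain ⟨m, d1⟩ := weakFlip hp c₁ c₂ (Q.subst v c₂ ::ₘ Γ₀) hΓp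
      have d1' : DerC (ReplMinus L) m
          (Fm.equal c₂ c₁ ::ₘ Fm.equal c₁ c₂ ::ₘ Q.subst v c₂ ::ₘ Γ₀) Δ₀ :=
        derCast d1 (by rw [hΓp])
      have hrep : ReplMinus L
          (Fm.equal c₁ c₂ ::ₘ Q.subst v c₂ ::ₘ (Fm.equal c₂ c₁ ::ₘ Γ₀))
          (Fm.equal c₁ c₂ ::ₘ Q.subst v c₁ ::ₘ (Fm.equal c₂ c₁ ::ₘ Γ₀)) :=
        ⟨c₁, c₂, v, Q, _, hQ, hvc, hvd, rfl, rfl⟩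
      have d2 := DerC.repl hrep (derCast d1' (sw3 _ _ _ _))
      rw [← hG]
      exact introSymm c₁ c₂ (Q.subst v c₁ ::ₘ Γ₀) Δ₀ (derCast d2 (sw3 _ _ _ _).symm)
    · rcases cases_cons h1 with ⟨he2, hu⟩ | ⟨w, hw1, hw2⟩
      · cases hQ with
        | rel R ts => exact absurd he2 (by simp [Fm.subst, Fm.ssub])
        | equal t₁ t₂ =>
          rw [subst_equal] at he2
          injection he2 with e1 e2
          subst e1; subst e2
          obtain ⟨m, d1⟩ := ih (t₁.subst (Function.update Term.var v c₂))
            (t₂.subst (Function.update Term.var v c₂)) (Fm.equal c₁ c₂ ::ₘ Γ₀)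
            (by rw [hΓp, subst_equal]; exact sw _ _ _)
          have hrep : ReplMinus L
              (Fm.equal c₁ c₂ ::ₘ (Fm.equal t₂ t₁).subst v c₂ ::ₘ Γ₀)
              (Fm.equal c₁ c₂ ::ₘ (Fm.equal t₂ t₁).subst v c₁ ::ₘ Γ₀) :=
            ⟨c₁, c₂, v, Fm.equal t₂ t₁, Γ₀, .equal _ _, hvc, hvd, rfl, rfl⟩
          have d2 := DerC.repl hrep (derCast d1 (sw _ _ _))
          refine ⟨m + 1, ?_⟩
          rw [h2, ← hu]
          exact derCast d2 (sw _ _ _)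
      · obtain ⟨m, d1⟩ := ih s r (Fm.equal c₁ c₂ ::ₘ Q.subst v c₂ ::ₘ w)
          (by rw [hΓp, hw1]; exact (sw3 _ _ _ _).symm)
        have hrep : ReplMinus L
            (Fm.equal c₁ c₂ ::ₘ Q.subst v c₂ ::ₘ (Fm.equal r s ::ₘ w))
            (Fm.equal c₁ c₂ ::ₘ Q.subst v c₁ ::ₘ (Fm.equal r s ::ₘ w)) :=
          ⟨c₁, c₂, v, Q, _, hQ, hvc, hvd, rfl, rfl⟩
        have d2 := DerC.repl hrep (derCast d1 (sw3 _ _ _ _))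
        refine ⟨m + 1, ?_⟩
        rw [h2, hw2]
        exact derCast d2 (sw3 _ _ _ _).symm

end SymmFinal
/-- The symmetry rule Symm is admissible in `G3c^=⁻`: if `s = r, Γ ⇒ Δ` is derivable,
then so is `r = s, Γ ⇒ Δ`. -/
theorem symm_admissible_G3cEqMinus (L : FirstOrder.Language.{u, v})
    (s r : L.Term ℕ) (Γ Δ : Multiset (Fm L))
    (hd : ∃ n, DerC (ReplMinus L) n (Fm.equal s r ::ₘ Γ) Δ) :
    ∃ n, DerC (ReplMinus L) n (Fm.equal r s ::ₘ Γ) Δ := by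
  obtain ⟨n, hd⟩ := hd
  exact symmFlip hd s r Γ rfl
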